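/- Exponential iterated integrals are independent of the parametrization of the path: let d_1, …, d_n, f_{12}, …, f_{(n−1)n} : [0,1] → ℂ be continuous and let φ : [0,1] → [0,1] be continuously differentiable, monotone nondecreasing, with φ(0) = 0 and φ(1) = 1. Then the exponential iterated integral of the reparametrized data, ∫ e^{(d_1∘φ)·φ′} ((f_{12}∘φ)·φ′) e^{(d_2∘φ)·φ′} ⋯ ((f_{(n−1)n}∘φ)·φ′) e^{(d_n∘φ)·φ′}, equals ∫ e^{d_1} f_{12} e^{d_2} ⋯ f_{(n−1)n} e^{d_n}. -/

import Mathlib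

open MeasureTheory Set

/-- The simplex `{t | a ≤ t 0 ≤ t 1 ≤ ⋯ ≤ t (n-1) ≤ b}`. -/
def simplexSet (a b : ℝ) (n : ℕ) : Set (Fin n → ℝ) :=
  {t | (∀ i, a ≤ t i ∧ t i ≤ b) ∧ ∀ i j : Fin n, i ≤ j → t i ≤ t j}

/-- The iterated integral `∫_{a ≤ t_1 ≤ ⋯ ≤ t_n ≤ b} w_1(t_1) ⋯ w_n(t_n)` of a word
`w` of complex-valued functions; it equals `1` for the empty word. -/
noncomputable def itIntL (a b : ℝ) (w : List (ℝ → ℂ)) : ℂ :=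
  ∫ t in simplexSet a b w.length, ∏ i : Fin w.length, w.get i (t i)

/-- The word `d_0^{m_0} f_0 d_1^{m_1} f_1 ⋯ f_{n-1} d_n^{m_n}` (with `d_i` repeated `m_i`
times), one of the terms in the defining sum of an exponential iterated integral. -/
def expWord {n : ℕ} (d : Fin (n + 1) → ℝ → ℂ) (f : Fin n → ℝ → ℂ)
    (m : Fin (n + 1) → ℕ) : List (ℝ → ℂ) :=
  (List.ofFn fun i : Fin n =>
      List.replicate (m i.castSucc) (d i.castSucc) ++ [f i]).flatten
    ++ List.replicate (m (Fin.last n)) (d (Fin.last n))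

/-- The exponential iterated integral `∫ e^{d_0} f_0 e^{d_1} f_1 ⋯ f_{n-1} e^{d_n}`
over `[a,b]`: the sum over all `(m_0, …, m_n) ∈ ℕ^{n+1}` of the iterated integrals
of the words `d_0^{m_0} f_0 d_1^{m_1} ⋯ f_{n-1} d_n^{m_n}`. -/
noncomputable def expItInt (a b : ℝ) {n : ℕ} (d : Fin (n + 1) → ℝ → ℂ)
    (f : Fin n → ℝ → ℂ) : ℂ :=
  ∑' m : Fin (n + 1) → ℕ, itIntL a b (expWord d f m)


section Aux

lemma isClosed_simplexSet (a b : ℝ) (n : ℕ) : IsClosed (simplexSet a b n) := by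
  have h : simplexSet a b n =
      (⋂ i, ({t : Fin n → ℝ | a ≤ t i} ∩ {t | t i ≤ b})) ∩
      ⋂ (i) (j) (_ : i ≤ j), {t : Fin n → ℝ | t i ≤ t j} := by
    ext t; simp [simplexSet, forall_and]
  rw [h]
  exact (isClosed_iInter fun i =>
      ((isClosed_le continuous_const (continuous_apply i)).inter
        (isClosed_le (continuous_apply i) continuous_const))).inter
    (isClosed_iInter fun i => isClosed_iInter fun j => isClosed_iInter fun _ =>
      isClosed_le (continuous_apply i) (continuous_apply j))

lemma itIntL_nil (a b : ℝ) : itIntL a b [] = 1 := by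
  have h : simplexSet a b 0 = univ := by ext t; simp [simplexSet]
  have hμ : (volume : Measure (Fin 0 → ℝ)) univ = 1 := by simp [volume_pi]
  simp [itIntL, h, integral_const, hμ, measureReal_def]

lemma insertNth_mem_simplexSet_iff {n : ℕ} {a b s : ℝ} {t : Fin n → ℝ} :
    Fin.insertNth 0 s t ∈ simplexSet a b (n + 1) ↔
      s ∈ Icc a b ∧ t ∈ simplexSet s b n := by
  have h0 : (Fin.insertNth (α := fun _ : Fin (n+1) => ℝ) 0 s t) 0 = s := by simp
  have hs : ∀ j : Fin n, (Fin.insertNth (α := fun _ : Fin (n+1) => ℝ) 0 s t) j.succ = t j :=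
    fun j => by simpa using Fin.insertNth_apply_succAbove 0 s t j
  constructor
  · rintro ⟨hb, hm⟩
    refine ⟨⟨?_, ?_⟩, ⟨fun j => ⟨?_, ?_⟩, fun i j hij => ?_⟩⟩
    · have := (hb 0).1; rwa [h0] at this
    · have := (hb 0).2; rwa [h0] at this
    · have := hm 0 j.succ (Fin.zero_le _); rwa [h0, hs] at this
    · have := (hb j.succ).2; rwa [hs] at this
    · have := hm i.succ j.succ (Fin.succ_le_succ_iff.mpr hij); rwa [hs, hs] at this
  · rintro ⟨⟨ha, hsb⟩, ⟨hb, hm⟩⟩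
    constructor
    · intro i
      induction i using Fin.cases with
      | zero => rw [h0]; exact ⟨ha, hsb⟩
      | succ j => rw [hs]; exact ⟨ha.trans (hb j).1, (hb j).2⟩
    · intro i j hij
      induction i using Fin.cases with
      | zero =>
        induction j using Fin.cases with
        | zero => exact le_rfl
        | succ j' => rw [h0, hs]; exact (hb j').1
      | succ i' =>
        induction j using Fin.cases with
        | zero => exact absurd hij (by simp [Fin.le_def])
        | succ j' => rw [hs, hs]; exact hm i' j' (by rwa [Fin.succ_le_succ_iff] at hij)

lemma itIntL_cons (g : ℝ → ℂ) (w : List (ℝ → ℂ)) (hg : ContinuousOn g (Icc (0:ℝ) 1))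
    (hw : ∀ u ∈ w, ContinuousOn u (Icc (0:ℝ) 1)) {a : ℝ} (ha : a ∈ Icc (0:ℝ) 1) :
    itIntL a 1 (g :: w) = ∫ s in Icc a 1, g s * itIntL s 1 w := by
  classical
  set n := w.length with hn
  set G : ℝ × (Fin n → ℝ) → ℂ := fun p => g p.1 * ∏ i : Fin n, w.get i (p.2 i) with hG
  set S' : Set (ℝ × (Fin n → ℝ)) := {p | p.1 ∈ Icc a 1 ∧ p.2 ∈ simplexSet p.1 1 n} with hS'
  have hS'closed : IsClosed S' := by
    have h : S' = ({p : ℝ × (Fin n → ℝ) | a ≤ p.1} ∩ {p | p.1 ≤ 1}) ∩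
        ((⋂ i, ({p : ℝ × (Fin n → ℝ) | p.1 ≤ p.2 i} ∩ {p | p.2 i ≤ 1})) ∩
        ⋂ (i) (j) (_ : i ≤ j), {p : ℝ × (Fin n → ℝ) | p.2 i ≤ p.2 j}) := by
      ext p; simp [hS', simplexSet, forall_and, mem_Icc, and_assoc]
    rw [h]
    have hc2 : ∀ i : Fin n, Continuous fun p : ℝ × (Fin n → ℝ) => p.2 i :=
      fun i => (continuous_apply i).comp continuous_snd
    exact (((isClosed_le continuous_const continuous_fst).inter
        (isClosed_le continuous_fst continuous_const)).inter
      (((isClosed_iInter fun i => (isClosed_le continuous_fst (hc2 i)).inter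
          (isClosed_le (hc2 i) continuous_const))).inter
        (isClosed_iInter fun i => isClosed_iInter fun j => isClosed_iInter fun _ =>
          isClosed_le (hc2 i) (hc2 j))))
  have hS'sub : S' ⊆ Icc a 1 ×ˢ Icc (fun _ : Fin n => a) (fun _ => 1) := by
    rintro ⟨s, t⟩ ⟨hs, ht⟩
    exact ⟨hs, fun i => hs.1.trans (ht.1 i).1, fun i => (ht.1 i).2⟩
  have hS'cpt : IsCompact S' :=
    (isCompact_Icc.prod isCompact_Icc).of_isClosed_subset hS'closed hS'sub
  have hGS' : ContinuousOn G S' := by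
    have hmapsto1 : ∀ p ∈ S', p.1 ∈ Icc (0:ℝ) 1 := fun p hp => ⟨ha.1.trans hp.1.1, hp.1.2⟩
    refine (hg.comp continuous_fst.continuousOn hmapsto1).mul ?_
    refine continuousOn_finset_prod _ fun i _ => ?_
    refine (hw (w.get i) (List.get_mem w i)).comp
      ((continuous_apply i).comp continuous_snd).continuousOn ?_
    rintro ⟨s, t⟩ ⟨hs, ht⟩
    exact ⟨(ha.1.trans hs.1).trans (ht.1 i).1, (ht.1 i).2⟩
  have hGint : Integrable (S'.indicator G) := by
    rw [integrable_indicator_iff hS'closed.measurableSet]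
    exact hGS'.integrableOn_compact hS'cpt
  have h1 : itIntL a 1 (g :: w) =
      ∫ t : Fin (n+1) → ℝ, (simplexSet a 1 (n+1)).indicator
        (fun t => ∏ i : Fin (n+1), (g :: w).get i (t i)) t := by
    rw [itIntL, integral_indicator (isClosed_simplexSet a 1 (n+1)).measurableSet]
    rfl
  have h2 : ∫ t : Fin (n+1) → ℝ, (simplexSet a 1 (n+1)).indicator
        (fun t => ∏ i : Fin (n+1), (g :: w).get i (t i)) t
      = ∫ p : ℝ × (Fin n → ℝ), S'.indicator G p := by
    rw [volume_pi, ← ((measurePreserving_piFinSuccAbove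
      (fun _ : Fin (n+1) => (volume : Measure ℝ)) 0).symm).integral_comp'
      (f := (MeasurableEquiv.piFinSuccAbove (fun _ : Fin (n+1) => ℝ) 0).symm)]
    have hvol : (volume : Measure ℝ).prod (Measure.pi fun _ : Fin n => volume)
        = (volume : Measure (ℝ × (Fin n → ℝ))) := by
      rw [Measure.volume_eq_prod, volume_pi]
    rw [hvol]
    congr 1
    ext p
    obtain ⟨s, t⟩ := p
    simp only [MeasurableEquiv.piFinSuccAbove_symm_apply, Fin.insertNthEquiv, Equiv.coe_fn_mk]
    by_cases hp : (s, t) ∈ S'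
    · rw [indicator_of_mem (insertNth_mem_simplexSet_iff.mpr ⟨hp.1, hp.2⟩),
        indicator_of_mem hp]
      rw [Fin.prod_univ_succ]
      have h0 : (Fin.insertNth (α := fun _ : Fin (n+1) => ℝ) 0 s t) 0 = s := by simp
      rw [h0]
      simp only [hG]
      congr 1
    · rw [indicator_of_notMem, indicator_of_notMem hp]
      intro hmem
      exact hp ⟨(insertNth_mem_simplexSet_iff.mp hmem).1,
        (insertNth_mem_simplexSet_iff.mp hmem).2⟩
  have h3 : ∫ p : ℝ × (Fin n → ℝ), S'.indicator G p
      = ∫ s : ℝ, ∫ t : Fin n → ℝ, S'.indicator G (s, t) := by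
    rw [Measure.volume_eq_prod] at hGint ⊢
    exact integral_prod _ hGint
  have h4 : ∀ s : ℝ, (∫ t : Fin n → ℝ, S'.indicator G (s, t))
      = (Icc a 1).indicator (fun s => g s * itIntL s 1 w) s := by
    intro s
    by_cases hs : s ∈ Icc a 1
    · have heq : ∀ t : Fin n → ℝ, S'.indicator G (s, t)
          = (simplexSet s 1 n).indicator (fun t => g s * ∏ i : Fin n, w.get i (t i)) t := by
        intro t
        by_cases ht : t ∈ simplexSet s 1 n
        · have hmem : (s, t) ∈ S' := by exact ⟨hs, ht⟩
          rw [indicator_of_mem hmem, indicator_of_mem ht]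
        · rw [indicator_of_notMem (fun hmem => ht hmem.2), indicator_of_notMem ht]
      rw [indicator_of_mem hs]
      simp only [heq]
      rw [integral_indicator (isClosed_simplexSet s 1 n).measurableSet,
        integral_const_mul, itIntL]
    · rw [indicator_of_notMem hs]
      have heq : ∀ t : Fin n → ℝ, S'.indicator G (s, t) = 0 := fun t =>
        indicator_of_notMem (fun hmem => hs hmem.1) _
      simp only [heq, integral_zero]
  rw [h1, h2, h3]
  simp only [h4]
  rw [integral_indicator measurableSet_Icc]

lemma icc_int_eq (h : ℝ → ℂ) {a : ℝ} (hA : a ≤ 1) :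
    ∫ s in Icc a 1, h s = ∫ s in a..1, h s := by
  rw [intervalIntegral.integral_of_le hA, integral_Icc_eq_integral_Ioc]

lemma itIntL_contOn (w : List (ℝ → ℂ)) (hw : ∀ u ∈ w, ContinuousOn u (Icc (0:ℝ) 1)) :
    ContinuousOn (fun a => itIntL a 1 w) (Icc (0:ℝ) 1) := by
  induction w with
  | nil => simp only [itIntL_nil]; exact continuousOn_const
  | cons g w ih =>
    have hg : ContinuousOn g (Icc (0:ℝ) 1) := hw g (List.mem_cons_self)
    have hw' : ∀ u ∈ w, ContinuousOn u (Icc (0:ℝ) 1) := fun u hu =>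
      hw u (List.mem_cons_of_mem _ hu)
    have hcont : ContinuousOn (fun s => g s * itIntL s 1 w) (Icc (0:ℝ) 1) := hg.mul (ih hw')
    have hint : IntegrableOn (fun s => g s * itIntL s 1 w) (uIcc (0:ℝ) 1) := by
      rw [uIcc_of_le zero_le_one]
      exact hcont.integrableOn_compact isCompact_Icc
    have hmain := intervalIntegral.continuousOn_primitive_interval_left hint
    rw [uIcc_of_le zero_le_one] at hmain
    refine hmain.congr fun x hx => ?_
    rw [itIntL_cons g w hg hw' hx, icc_int_eq _ hx.2]

lemma itIntL_subst (φ φ' : ℝ → ℝ)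
    (hφ : ∀ t ∈ Icc (0:ℝ) 1, HasDerivWithinAt φ (φ' t) (Icc (0:ℝ) 1) t)
    (hφ' : ContinuousOn φ' (Icc (0:ℝ) 1))
    (hmono : MonotoneOn φ (Icc (0:ℝ) 1)) (hφ0 : φ 0 = 0) (hφ1 : φ 1 = 1)
    (w : List (ℝ → ℂ)) (hw : ∀ u ∈ w, ContinuousOn u (Icc (0:ℝ) 1)) :
    ∀ t ∈ Icc (0:ℝ) 1,
      itIntL t 1 (w.map fun u s => u (φ s) * (φ' s : ℂ)) = itIntL (φ t) 1 w := by
  have hφcont : ContinuousOn φ (Icc (0:ℝ) 1) := fun x hx => (hφ x hx).continuousWithinAt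
  have hmaps : MapsTo φ (Icc (0:ℝ) 1) (Icc (0:ℝ) 1) := fun x hx =>
    ⟨hφ0 ▸ hmono (left_mem_Icc.mpr zero_le_one) hx hx.1,
     hφ1 ▸ hmono hx (right_mem_Icc.mpr zero_le_one) hx.2⟩
  induction w with
  | nil => intro t ht; simp [itIntL_nil]
  | cons g w ih =>
    intro t ht
    have hg : ContinuousOn g (Icc (0:ℝ) 1) := hw g (List.mem_cons_self)
    have hw' : ∀ u ∈ w, ContinuousOn u (Icc (0:ℝ) 1) := fun u hu =>
      hw u (List.mem_cons_of_mem _ hu)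
    have hpg : ContinuousOn (fun s => g (φ s) * (φ' s : ℂ)) (Icc (0:ℝ) 1) :=
      (hg.comp hφcont hmaps).mul (Complex.continuous_ofReal.comp_continuousOn hφ')
    have hpw : ∀ u ∈ w.map fun u s => u (φ s) * (φ' s : ℂ), ContinuousOn u (Icc (0:ℝ) 1) := by
      intro u hu
      rcases List.mem_map.mp hu with ⟨v, hv, rfl⟩
      exact ((hw' v hv).comp hφcont hmaps).mul
        (Complex.continuous_ofReal.comp_continuousOn hφ')
    have hφt : φ t ∈ Icc (0:ℝ) 1 := hmaps ht
    rw [List.map_cons, itIntL_cons _ _ hpg hpw ht, itIntL_cons g w hg hw' hφt,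
      icc_int_eq _ ht.2, icc_int_eq _ hφt.2]
    have hsub : (∫ x in t..(1:ℝ), φ' x • ((fun u => g u * itIntL u 1 w) ∘ φ) x)
        = ∫ u in φ t..φ 1, g u * itIntL u 1 w := by
      apply intervalIntegral.integral_comp_smul_deriv''
      · exact hφcont.mono (by rw [uIcc_of_le ht.2]; exact Icc_subset_Icc ht.1 le_rfl)
      · intro x hx
        rw [min_eq_left ht.2, max_eq_right ht.2] at hx
        have hx01 : x ∈ Ioo (0:ℝ) 1 := ⟨lt_of_le_of_lt ht.1 hx.1, hx.2⟩
        exact ((hφ x (Ioo_subset_Icc_self hx01)).hasDerivAt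
          (Icc_mem_nhds hx01.1 hx01.2)).hasDerivWithinAt
      · exact hφ'.mono (by rw [uIcc_of_le ht.2]; exact Icc_subset_Icc ht.1 le_rfl)
      · refine (hg.mul (itIntL_contOn w hw')).mono ?_
        rw [uIcc_of_le ht.2]
        exact (image_mono (f := φ) (Icc_subset_Icc ht.1 le_rfl)).trans hmaps.image_subset
    rw [hφ1] at hsub
    rw [← hsub]
    apply intervalIntegral.integral_congr
    intro x hx
    rw [uIcc_of_le ht.2] at hx
    have hx01 : x ∈ Icc (0:ℝ) 1 := ⟨ht.1.trans hx.1, hx.2⟩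
    simp only [Function.comp]
    rw [ih hw' x hx01, Complex.real_smul]
    ring

lemma expWord_map' {n : ℕ} (d : Fin (n + 1) → ℝ → ℂ) (f : Fin n → ℝ → ℂ)
    (m : Fin (n + 1) → ℕ) (p : (ℝ → ℂ) → (ℝ → ℂ)) :
    expWord (fun i => p (d i)) (fun i => p (f i)) m = (expWord d f m).map p := by
  simp [expWord, List.map_flatten, List.map_ofFn, Function.comp_def]

lemma expWord_forall' {n : ℕ} {P : (ℝ → ℂ) → Prop} {d : Fin (n + 1) → ℝ → ℂ}
    {f : Fin n → ℝ → ℂ} {m : Fin (n + 1) → ℕ}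
    (hd : ∀ i, P (d i)) (hf : ∀ i, P (f i)) : ∀ u ∈ expWord d f m, P u := by
  intro u hu
  rw [expWord, List.mem_append] at hu
  rcases hu with hu | hu
  · rw [List.mem_flatten] at hu
    rcases hu with ⟨l, hl, hul⟩
    rw [List.mem_ofFn] at hl
    rcases hl with ⟨i, rfl⟩
    rcases List.mem_append.mp hul with h | h
    · rw [List.eq_of_mem_replicate h]; exact hd _
    · rw [List.mem_singleton.mp h]; exact hf _
  · rw [List.eq_of_mem_replicate hu]; exact hd _

end Aux

/-- exponential iterated integrals are independent of the parametrization
of the path: pulling all the data back along a `C¹` monotone surjective reparametrization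
`φ : [0,1] → [0,1]` does not change the integral. -/
theorem stmt6 {n : ℕ} (d : Fin (n + 1) → ℝ → ℂ) (f : Fin n → ℝ → ℂ)
    (hd : ∀ i, ContinuousOn (d i) (Icc (0 : ℝ) 1))
    (hf : ∀ i, ContinuousOn (f i) (Icc (0 : ℝ) 1))
    (φ φ' : ℝ → ℝ)
    (hφ : ∀ t ∈ Icc (0 : ℝ) 1, HasDerivWithinAt φ (φ' t) (Icc (0 : ℝ) 1) t)
    (hφ' : ContinuousOn φ' (Icc (0 : ℝ) 1))
    (hmono : MonotoneOn φ (Icc (0 : ℝ) 1))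
    (hφ0 : φ 0 = 0) (hφ1 : φ 1 = 1) :
    expItInt 0 1 (fun i t => d i (φ t) * (φ' t : ℂ))
        (fun i t => f i (φ t) * (φ' t : ℂ)) =
      expItInt 0 1 d f := by
  unfold expItInt
  refine tsum_congr fun m => ?_
  have hmem : ∀ u ∈ expWord d f m, ContinuousOn u (Icc (0:ℝ) 1) := expWord_forall' hd hf
  have h1 := itIntL_subst φ φ' hφ hφ' hmono hφ0 hφ1 (expWord d f m) hmem 0
    (left_mem_Icc.mpr zero_le_one)
  rw [hφ0] at h1
  rw [← h1, ← expWord_map' d f m (fun u s => u (φ s) * (φ' s : ℂ))]
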